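/- The liquid price of anarchy of EGFP is at most 2: for every position game induced by EGFP and every pure Nash equilibrium bid matrix b (with payments within budgets), 2·LW(σ(b)) ≥ OPT. -/

import Mathlib

/-! General position games with `n` players and `n` positions.
`α j` is the CTR of position `j`, `v i` and `c i` are the value and budget of player
`i`, an assignment is a permutation `σ` sending each player to her position, and
`σ.symm j` is the player occupying position `j`. -/

/-- A ranking `σ` is consistent with scalar bids `b` if players in earlier positions
bid at least as much (non-increasing bid order). -/
def RankConsistent {n : ℕ} (b : Fin n → ℝ) (σ : Equiv.Perm (Fin n)) : Prop :=
  ∀ i j : Fin n, σ i < σ j → b j ≤ b i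

/-- The bid of the player ranked just below player `i` (zero for the last position). -/
noncomputable def nextBid {n : ℕ} (b : Fin n → ℝ) (σ : Equiv.Perm (Fin n)) (i : Fin n) : ℝ :=
  if h : (σ i : ℕ) + 1 < n then b (σ.symm ⟨(σ i : ℕ) + 1, h⟩) else 0

/-- GSP utility: player `i` gets CTR of her position times her value, and pays the
next highest bid per click. -/
noncomputable def gspUtil {n : ℕ} (α v : Fin n → ℝ) (b : Fin n → ℝ)
    (σ : Equiv.Perm (Fin n)) (i : Fin n) : ℝ :=
  α (σ i) * v i - α (σ i) * nextBid b σ i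

/-- The no-over assumption for a bid `y` of player `i` occupying position `p`:
CTR times bid is at most the minimum of the player's total value and her budget. -/
def NoOverAt {n : ℕ} (α v c : Fin n → ℝ) (i p : Fin n) (y : ℝ) : Prop :=
  α p * y ≤ min (α p * v i) (c i)

/-- Pure Nash equilibrium of the GSP position game under the no-over assumption:
bids are non-negative, `σ` ranks the players by bids, everyone satisfies no-over, and
no player can improve her utility by a unilateral no-over deviation, whatever
consistent ranking results. -/
def GspEquilibrium {n : ℕ} (α v c : Fin n → ℝ) (b : Fin n → ℝ)
    (σ : Equiv.Perm (Fin n)) : Prop :=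
  (∀ i, 0 ≤ b i) ∧ RankConsistent b σ ∧ (∀ i, NoOverAt α v c i (σ i) (b i)) ∧
    ∀ (i : Fin n) (y : ℝ) (τ : Equiv.Perm (Fin n)), 0 ≤ y →
      RankConsistent (Function.update b i y) τ → NoOverAt α v c i (τ i) y →
        gspUtil α v (Function.update b i y) τ i ≤ gspUtil α v b σ i

/-- Total VCG payment of player `i`: the externality `∑_{k > σ i} b_{π(k)} (α_{k-1} - α_k)`. -/
noncomputable def vcgPay {n : ℕ} (α : Fin n → ℝ) (b : Fin n → ℝ)
    (σ : Equiv.Perm (Fin n)) (i : Fin n) : ℝ :=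
  ∑ k ∈ Finset.univ.filter (fun k : Fin n => σ i < k),
    b (σ.symm k) * (α ⟨(k : ℕ) - 1, lt_of_le_of_lt (Nat.sub_le _ _) k.isLt⟩ - α k)

/-- VCG utility of player `i`. -/
noncomputable def vcgUtil {n : ℕ} (α v : Fin n → ℝ) (b : Fin n → ℝ)
    (σ : Equiv.Perm (Fin n)) (i : Fin n) : ℝ :=
  α (σ i) * v i - vcgPay α b σ i

/-- Pure Nash equilibrium of the VCG position game under the no-over assumption. -/
def VcgEquilibrium {n : ℕ} (α v c : Fin n → ℝ) (b : Fin n → ℝ)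
    (σ : Equiv.Perm (Fin n)) : Prop :=
  (∀ i, 0 ≤ b i) ∧ RankConsistent b σ ∧ (∀ i, NoOverAt α v c i (σ i) (b i)) ∧
    ∀ (i : Fin n) (y : ℝ) (τ : Equiv.Perm (Fin n)), 0 ≤ y →
      RankConsistent (Function.update b i y) τ → NoOverAt α v c i (τ i) y →
        vcgUtil α v (Function.update b i y) τ i ≤ vcgUtil α v b σ i

/-- EGFP consistency: positions are allocated sequentially, so the player winning
position `p` bids at least as much for `p` as every player allocated at `p` or later. -/
def EgfpConsistent {n : ℕ} (b : Fin n → Fin n → ℝ) (σ : Equiv.Perm (Fin n)) : Prop :=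
  ∀ (p i : Fin n), p ≤ σ i → b i p ≤ b (σ.symm p) p

/-- EGFP utility: first-price payments, each winner pays her own bid for her position. -/
noncomputable def egfpUtil {n : ℕ} (α v : Fin n → ℝ) (b : Fin n → Fin n → ℝ)
    (σ : Equiv.Perm (Fin n)) (i : Fin n) : ℝ :=
  α (σ i) * v i - b i (σ i)

/-- Pure Nash equilibrium of the EGFP position game, with payments within budgets. -/
def EgfpEquilibrium {n : ℕ} (α v c : Fin n → ℝ) (b : Fin n → Fin n → ℝ)
    (σ : Equiv.Perm (Fin n)) : Prop :=
  (∀ i p, 0 ≤ b i p) ∧ EgfpConsistent b σ ∧ (∀ i, b i (σ i) ≤ c i) ∧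
    ∀ (i : Fin n) (y : Fin n → ℝ) (τ : Equiv.Perm (Fin n)), (∀ p, 0 ≤ y p) →
      EgfpConsistent (Function.update b i y) τ → y (τ i) ≤ c i →
        egfpUtil α v (Function.update b i y) τ i ≤ egfpUtil α v b σ i

/-- Liquid welfare of the assignment `σ`: each player's value is capped by her budget. -/
noncomputable def liquidWelfare {n : ℕ} (α v c : Fin n → ℝ) (σ : Equiv.Perm (Fin n)) : ℝ :=
  ∑ i, min (α (σ i) * v i) (c i)

/-- Greedy sequential allocation: any bid profile admits a ranking that keeps a
consistent prefix and is consistent from position `m` on. -/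
private lemma greedyAux {n : ℕ} (B : Fin n → Fin n → ℝ) :
    ∀ (k m : ℕ) (π : Equiv.Perm (Fin n)), n - m ≤ k →
    ∃ τ : Equiv.Perm (Fin n),
      (∀ j, (π j : ℕ) < m → τ j = π j) ∧
      (∀ j, m ≤ (π j : ℕ) → m ≤ (τ j : ℕ)) ∧
      (∀ (p j : Fin n), m ≤ (p : ℕ) → p ≤ τ j → B j p ≤ B (τ.symm p) p) := by
  intro k
  induction k with
  | zero =>
    intro m π h
    refine ⟨π, fun j _ => rfl, fun j hj => hj, fun p j hp _ => absurd hp ?_⟩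
    have := p.isLt; omega
  | succ k ih =>
    intro m π h
    by_cases hm : n ≤ m
    · refine ⟨π, fun j _ => rfl, fun j hj => hj, fun p j hp _ => absurd hp ?_⟩
      have := p.isLt; omega
    · push_neg at hm
      set M : Fin n := ⟨m, hm⟩ with hMdef
      have hMval : (M : ℕ) = m := rfl
      obtain ⟨js, hjS, hjmax⟩ :=
        Finset.exists_max_image (Finset.univ.filter fun j => m ≤ (π j : ℕ))
          (fun j => B j M) ⟨π.symm M, by simp [hMval]⟩
      have hjm : m ≤ (π js : ℕ) := by simpa using hjS
      set π₁ : Equiv.Perm (Fin n) := π.trans (Equiv.swap M (π js)) with hπ₁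
      obtain ⟨τ, h1, h2, h3⟩ := ih (m + 1) π₁ (by omega)
      have hπ₁js : π₁ js = M := by simp [hπ₁, Equiv.swap_apply_right]
      have hτjs : τ js = M := by
        rw [h1 js (by rw [hπ₁js, hMval]; omega), hπ₁js]
      -- fact: for j with π j < m, π₁ j = π j
      have hpre : ∀ j, (π j : ℕ) < m → π₁ j = π j := by
        intro j hj
        have h1' : π j ≠ M := fun h => by rw [h] at hj; simp [hMval] at hj
        have h2' : π j ≠ π js := fun h => by rw [h] at hj; omega
        simp [hπ₁, Equiv.swap_apply_of_ne_of_ne h1' h2']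
      refine ⟨τ, ?_, ?_, ?_⟩
      · intro j hj
        rw [h1 j (by rw [hpre j hj]; omega), hpre j hj]
      · intro j hj
        have hge : m ≤ (π₁ j : ℕ) := by
          rcases eq_or_ne (π j) M with h' | h'
          · have : π₁ j = π js := by simp [hπ₁, h', Equiv.swap_apply_left]
            rw [this]; exact hjm
          rcases eq_or_ne (π j) (π js) with h'' | h''
          · have : π₁ j = M := by simp [hπ₁, h'', Equiv.swap_apply_right]
            rw [this]
          · have : π₁ j = π j := by simp [hπ₁, Equiv.swap_apply_of_ne_of_ne h' h'']
            rw [this]; exact hj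
        rcases lt_or_ge (π₁ j : ℕ) (m + 1) with h' | h'
        · rw [h1 j h']; exact hge
        · exact le_of_lt (Nat.lt_of_lt_of_le (Nat.lt_succ_of_le le_rfl) (h2 j h'))
      · intro p j hp hpj
        rcases lt_or_ge (p : ℕ) (m + 1) with h' | h'
        · have hpM : p = M := Fin.ext (by omega)
          have hsymm : τ.symm M = js := by rw [← hτjs, Equiv.symm_apply_apply]
          rw [hpM, hsymm]
          rcases eq_or_ne j js with rfl | hne
          · exact le_refl _
          · have hjmem : m ≤ (π j : ℕ) := by
              by_contra hcon
              push_neg at hcon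
              have : τ j = π j := by rw [h1 j (by rw [hpre j hcon]; omega), hpre j hcon]
              have : (τ j : ℕ) < m := by rw [this]; exact hcon
              rw [hpM] at hpj
              have := Fin.le_def.mp hpj
              rw [hMval] at this
              omega
            exact hjmax j (by simp [hjmem])
        · exact h3 p j h' hpj

/-- The liquid price of anarchy of EGFP is at most 2: at every pure Nash equilibrium
(b, σ) of every EGFP position game (with payments within budgets), twice the liquid
welfare of σ is at least the liquid welfare of any assignment, in particular the
optimal one. -/
theorem stmt16 {n : ℕ} (α v c : Fin n → ℝ) (hα : Antitone α) (hαpos : ∀ j, 0 < α j)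
    (hv : ∀ i, 0 ≤ v i) (hc : ∀ i, 0 ≤ c i)
    (b : Fin n → Fin n → ℝ) (σ : Equiv.Perm (Fin n)) (heq : EgfpEquilibrium α v c b σ) :
    ∀ o : Equiv.Perm (Fin n), 2 * liquidWelfare α v c σ ≥ liquidWelfare α v c o := by
  obtain ⟨hb0, hcons, hbud, hnash⟩ := heq
  -- Individual rationality: b k (σ k) ≤ α (σ k) * v k
  have hIR : ∀ k, 0 ≤ α (σ k) * v k - b k (σ k) := by
    intro k
    set B := Function.update b k (fun _ => 0) with hB
    obtain ⟨τ, _, _, h3⟩ := greedyAux B n 0 σ (by omega)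
    have hconsB : EgfpConsistent B τ := fun p j hpj => h3 p j (Nat.zero_le _) hpj
    have := hnash k (fun _ => 0) τ (fun _ => le_refl 0) hconsB (hc k)
    have hLHS : egfpUtil α v B τ k = α (τ k) * v k := by
      simp [egfpUtil, hB, Function.update_self]
    rw [hLHS] at this
    have : (0:ℝ) ≤ α (τ k) * v k := mul_nonneg (hαpos _).le (hv k)
    unfold egfpUtil at *
    linarith [hnash k (fun _ => 0) τ (fun _ => le_refl 0) hconsB (hc k), hLHS]
  intro o
  -- key per-player inequality
  have key : ∀ i, min (α (o i) * v i) (c i) ≤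
      min (α (σ i) * v i) (c i) + b (σ.symm (o i)) (o i) := by
    intro i
    set ps := o i with hps
    set w := σ.symm ps with hw
    set P := b w ps with hP
    have hP0 : 0 ≤ P := hb0 w ps
    have hterm0 : 0 ≤ min (α (σ i) * v i) (c i) :=
      le_min (mul_nonneg (hαpos _).le (hv i)) (hc i)
    rcases le_or_gt (σ i) ps with hle | hgt
    · -- i already at a weakly better position
      have : α ps * v i ≤ α (σ i) * v i :=
        mul_le_mul_of_nonneg_right (hα hle) (hv i)
      have := min_le_min this (le_refl (c i))
      linarith
    · rcases lt_or_ge (c i) P with hcP | hPc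
      · -- price above budget: trivial
        have : min (α ps * v i) (c i) ≤ c i := min_le_right _ _
        linarith
      · -- deviation: grab position ps at price P
        have hwi : w ≠ i := by
          intro h
          rw [hw] at h
          have : σ (σ.symm ps) = σ i := congrArg σ h
          rw [Equiv.apply_symm_apply] at this
          exact absurd this (ne_of_lt hgt)
        set y : Fin n → ℝ := fun p => if p = ps then P else 0 with hy
        set B := Function.update b i y with hB
        set π : Equiv.Perm (Fin n) := (Equiv.swap i w).trans σ with hπ
        have hπi : π i = ps := by
          simp [hπ, Equiv.swap_apply_left, hw]
        obtain ⟨τ, h1, h2, h3⟩ := greedyAux B n ((ps : ℕ) + 1) π (by omega)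
        have hτi : τ i = ps := by
          rw [h1 i (by rw [hπi]; omega), hπi]
        -- claim: for j ≠ i with p ≤ τ j and p ≤ ps we get p ≤ σ j
        have claim : ∀ (p j : Fin n), j ≠ i → (p : ℕ) ≤ (ps : ℕ) → p ≤ τ j → p ≤ σ j := by
          intro p j hji hpps hpj
          by_contra hcon
          push_neg at hcon
          have hjw : j ≠ w := by
            intro h
            rw [h, hw, Equiv.apply_symm_apply] at hcon
            have := Fin.lt_def.mp hcon
            omega
          have hπj : π j = σ j := by
            simp [hπ, Equiv.swap_apply_of_ne_of_ne hji hjw]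
          have hτj : τ j = σ j := by
            rw [h1 j (by rw [hπj]; have := Fin.lt_def.mp hcon; omega), hπj]
          rw [hτj] at hpj
          exact absurd hpj (not_le.mpr hcon)
        have hconsB : EgfpConsistent B τ := by
          intro p j hpj
          rcases lt_or_ge (ps : ℕ) (p : ℕ) with hp | hp
          · exact h3 p j (by omega) hpj
          · rcases eq_or_lt_of_le hp with hpe | hplt
            · -- p = ps, winner is i
              have hpps : p = ps := Fin.ext hpe
              have hsymm : τ.symm ps = i := by rw [← hτi, Equiv.symm_apply_apply]
              rw [hpps, hsymm]
              have hBi : B i ps = P := by simp [hB, Function.update_self, hy]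
              rcases eq_or_ne j i with rfl | hne
              · rw [hBi]
              · rw [hBi]
                have hBj : B j ps = b j ps := by rw [hB]; rw [Function.update_of_ne hne]
                rw [hBj]
                have hpsj : ps ≤ σ j := claim ps j hne le_rfl (hpps ▸ hpj)
                have := hcons ps j hpsj
                rw [← hw, ← hP] at this
                exact this
            · -- p < ps
              set u := σ.symm p with hu
              have hui : u ≠ i := by
                intro h
                have : σ (σ.symm p) = σ i := congrArg σ h
                rw [Equiv.apply_symm_apply] at this
                rw [this] at hplt
                have := Fin.lt_def.mp hgt
                omega
              have huw : u ≠ w := by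
                intro h
                have : σ u = σ w := congrArg σ h
                rw [hu, hw, Equiv.apply_symm_apply, Equiv.apply_symm_apply] at this
                rw [this] at hplt
                omega
              have hπu : π u = p := by
                rw [hπ, Equiv.trans_apply, Equiv.swap_apply_of_ne_of_ne hui huw, hu, Equiv.apply_symm_apply]
              have hτu : τ u = p := by
                rw [h1 u (by rw [hπu]; omega), hπu]
              have hsymm : τ.symm p = u := by rw [← hτu, Equiv.symm_apply_apply]
              rw [hsymm]
              have hBu : B u p = b u p := by rw [hB, Function.update_of_ne hui]
              rw [hBu]
              rcases eq_or_ne j i with rfl | hne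
              · have : B j p = 0 := by
                  rw [hB, Function.update_self, hy]
                  have : p ≠ ps := by intro h; rw [h] at hplt; omega
                  simp [this]
                rw [this]
                exact hb0 u p
              · have hBj : B j p = b j p := by rw [hB, Function.update_of_ne hne]
                rw [hBj]
                have hpsj : p ≤ σ j := claim p j hne (le_of_lt hplt) hpj
                have := hcons p j hpsj
                rw [← hu] at this
                exact this
        have hyn : ∀ p, 0 ≤ y p := by
          intro p; rw [hy]; dsimp only; split
          · exact hP0
          · exact le_refl 0
        have hyc : y (τ i) ≤ c i := by rw [hτi, hy]; simpa using hPc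
        have hdev := hnash i y τ hyn hconsB hyc
        have hLHS : egfpUtil α v B τ i = α ps * v i - P := by
          rw [egfpUtil, hτi, hB, Function.update_self, hy]; simp
        rw [hLHS] at hdev
        -- hdev : α ps * v i - P ≤ α (σ i) * v i - b i (σ i)
        have hu0 : 0 ≤ α (σ i) * v i - b i (σ i) := hIR i
        have hbi0 : 0 ≤ b i (σ i) := hb0 i (σ i)
        unfold egfpUtil at hdev
        set U := α (σ i) * v i - b i (σ i) with hU
        have step1 : min (α ps * v i) (c i) ≤ min (U + P) (c i) :=
          min_le_min (by linarith) (le_refl _)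
        have step2 : min (U + P) (c i) ≤ min U (c i) + P := by
          have : min (U + P) (c i) ≤ min (U + P) (c i + P) :=
            min_le_min (le_refl _) (by linarith)
          rw [min_add_add_right] at this
          exact this
        have step3 : min U (c i) ≤ min (α (σ i) * v i) (c i) :=
          min_le_min (by rw [hU]; linarith) (le_refl _)
        linarith
  -- summation
  have hsum1 : liquidWelfare α v c o ≤
      liquidWelfare α v c σ + ∑ i, b (σ.symm (o i)) (o i) := by
    rw [liquidWelfare, liquidWelfare, ← Finset.sum_add_distrib]
    exact Finset.sum_le_sum (fun i _ => key i)
  have hre : ∑ i, b (σ.symm (o i)) (o i) = ∑ k, b k (σ k) := by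
    have := Equiv.sum_comp (o.trans σ.symm) (fun k => b k (σ k))
    simpa using this
  have hrev : ∑ k, b k (σ k) ≤ liquidWelfare α v c σ := by
    rw [liquidWelfare]
    exact Finset.sum_le_sum (fun k _ => le_min (by linarith [hIR k]) (hbud k))
  rw [hre] at hsum1
  linarith
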